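/- Let c > 0, let d, p, J be positive natural numbers, let x ∈ ℝ^d, and let D_1, …, D_J : ℝ^d → ℝ^p be linear maps. Let (w_i)_{i ∈ ℕ} be i.i.d. random vectors in ℝ^p, each standard Gaussian with scale c, and let (V_{i,j})_{i ∈ ℕ, j ∈ Fin J} be i.i.d. real random variables, each with the Gaussian distribution of mean 0 and variance c², with all of these mutually independent. Then almost surely, (1/N) · Σ_{i=1}^{N} Σ_{j=1}^{J} D_j^* ( V_{i,j} · 𝟙(⟨w_i, D_j x⟩ > 0) · w_i ) converges to 0 as N → ∞. -/

import Mathlib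

open MeasureTheory ProbabilityTheory Filter
open scoped RealInnerProductSpace NNReal ProbabilityTheory Topology

section AuxGaussian

open Real

lemma aux_integrable_id_gaussian (v : ℝ≥0) : Integrable id (gaussianReal 0 v) := by
  rcases eq_or_ne v 0 with h | h
  · rw [h, gaussianReal_zero_var]
    refine ⟨aestronglyMeasurable_id, ?_⟩
    rw [HasFiniteIntegral, lintegral_dirac]
    simp
  · rw [gaussianReal_of_var_ne_zero _ h,
      integrable_withDensity_iff (measurable_gaussianPDF _ _)
        (Filter.Eventually.of_forall fun x => ENNReal.ofReal_lt_top)]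
    have hv : 0 < (v:ℝ) := by positivity
    have h2v : 0 < (2*(v:ℝ))⁻¹ := by positivity
    have h2v' : (2*(v:ℝ)) ≠ 0 := by positivity
    have := (integrable_mul_exp_neg_mul_sq h2v).const_mul (√(2 * π * v))⁻¹
    refine this.congr (Filter.Eventually.of_forall fun x => ?_)
    simp only [gaussianPDF, gaussianPDFReal, id]
    rw [ENNReal.toReal_ofReal (by positivity)]
    rw [show -(x - 0)^2/(2*(v:ℝ)) = -(2*(v:ℝ))⁻¹ * x^2 by field_simp; ring]
    ring

lemma aux_integral_id_gaussian (v : ℝ≥0) : ∫ x, x ∂(gaussianReal 0 v) = 0 := by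
  have hmap : Measure.map (fun x : ℝ => -x) (gaussianReal 0 v) = gaussianReal 0 v := by
    have := gaussianReal_map_const_mul (μ := 0) (v := v) (-1)
    simpa using this
  have h1 : ∫ x, x ∂(gaussianReal 0 v) = ∫ x, -x ∂(gaussianReal 0 v) := by
    conv_lhs => rw [← hmap]
    exact integral_map (φ := fun x : ℝ => -x) measurable_neg.aemeasurable
      aestronglyMeasurable_id
  have h2 : ∫ x, -x ∂(gaussianReal 0 v) = - ∫ x, x ∂(gaussianReal 0 v) := integral_neg _
  linarith [h1, h2]

end AuxGaussian

section AuxIndep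

lemma aux_iIndepFun_congr {Ω ι : Type*} [MeasureSpace Ω] {f g : ι → Ω → ℝ}
    (hf : iIndepFun f ℙ) (hfg : ∀ i, f i =ᵐ[ℙ] g i) :
    iIndepFun g ℙ := by
  rw [iIndepFun_iff_measure_inter_preimage_eq_mul] at hf ⊢
  intro S sets hsets
  have key : ∀ᵐ ω ∂(ℙ : Measure Ω), ∀ i ∈ S, f i ω = g i ω :=
    (ae_ball_iff S.countable_toSet).2 fun i _ => hfg i
  have h1 : ((⋂ i ∈ S, f i ⁻¹' sets i : Set Ω) : Set Ω)
      =ᵐ[ℙ] (⋂ i ∈ S, g i ⁻¹' sets i : Set Ω) := by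
    rw [Filter.eventuallyEq_set]
    filter_upwards [key] with ω hω
    simp only [Set.mem_iInter, Set.mem_preimage]
    exact ⟨fun h i hi => hω i hi ▸ h i hi, fun h i hi => (hω i hi).symm ▸ h i hi⟩
  rw [measure_congr h1.symm, hf S hsets]
  refine Finset.prod_congr rfl fun i hi => ?_
  refine measure_congr ?_
  rw [Filter.eventuallyEq_set]
  filter_upwards [hfg i] with ω hω
  simp [Set.mem_preimage, hω]

lemma aux_iIndepFun_reindex {Ω ι ι' : Type*} [MeasureSpace Ω] (u : ι' → ι)
    (hu : Function.Injective u) {f : ι → Ω → ℝ}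
    (hf : iIndepFun f ℙ) :
    iIndepFun (fun k => f (u k)) ℙ := by
  classical
  rw [iIndepFun_iff_measure_inter_preimage_eq_mul] at hf ⊢
  intro S sets hsets
  set sets' : ι → Set ℝ := Function.extend u sets (fun _ => Set.univ) with hsets'
  have hext : ∀ k, sets' (u k) = sets k := fun k => hu.extend_apply _ _ _
  have h1 : (⋂ k ∈ S, (fun ω => f (u k) ω) ⁻¹' sets k) = ⋂ i ∈ S.image u, f i ⁻¹' sets' i := by
    rw [Finset.set_biInter_finset_image]
    exact Set.iInter₂_congr fun k _ => by rw [hext]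
  rw [h1, hf (S.image u) (fun i hi => by
    obtain ⟨k, hk, rfl⟩ := Finset.mem_image.1 hi
    rw [hext]; exact hsets k hk)]
  rw [Finset.prod_image (fun a _ b _ h => hu h)]
  exact Finset.prod_congr rfl fun k _ => by rw [hext]

lemma aux_map_pi {Ω ι : Type*} [Fintype ι] [MeasureSpace Ω] [IsProbabilityMeasure (ℙ : Measure Ω)]
    {f : ι → Ω → ℝ} (hmeas : ∀ i, Measurable (f i))
    (hindep : iIndepFun f ℙ) (ν : ι → Measure ℝ)
    [∀ i, IsProbabilityMeasure (ν i)]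
    (hν : ∀ i, Measure.map (f i) ℙ = ν i) :
    Measure.map (fun ω i => f i ω) ℙ = Measure.pi ν := by
  refine (Measure.pi_eq fun s hs => ?_).symm
  rw [Measure.map_apply (measurable_pi_lambda _ hmeas) (MeasurableSet.univ_pi hs)]
  have h1 : (fun ω i => f i ω) ⁻¹' Set.pi Set.univ s = ⋂ i, f i ⁻¹' s i := by
    ext ω; simp [Set.mem_pi]
  rw [h1, hindep.meas_iInter fun i => ⟨s i, hs i, rfl⟩]
  exact Finset.prod_congr rfl fun i _ => by
    rw [← hν i, Measure.map_apply (hmeas i) (hs i)]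

lemma aux_norm_le_sum {n : ℕ} (y : EuclideanSpace ℝ (Fin n)) : ‖y‖ ≤ ∑ m, |y m| := by
  rw [EuclideanSpace.norm_eq]
  have h1 : ∑ m, ‖y m‖^2 ≤ (∑ m, ‖y m‖)^2 :=
    Finset.sum_sq_le_sq_sum_of_nonneg fun i _ => norm_nonneg _
  calc Real.sqrt (∑ m, ‖y m‖ ^ 2) ≤ Real.sqrt ((∑ m, ‖y m‖)^2) := Real.sqrt_le_sqrt h1
    _ = ∑ m, ‖y m‖ := Real.sqrt_sq (Finset.sum_nonneg fun i _ => norm_nonneg _)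
    _ = ∑ m, |y m| := by simp [Real.norm_eq_abs]

end AuxIndep

set_option maxHeartbeats 1000000 in
/-- **Theorem 2, LLN form for the full three-layer CNN.** With patch maps `D j`,
i.i.d. standard Gaussian (scale `c`) filters `w i` and i.i.d. `N(0, c²)` weights `V (i, j)`,
all mutually independent (as joint independence of all real coordinates), almost surely the
`(1/N)`-scaled saliency map
`(1/N) ∑_{i<N} ∑_j D jᵀ (V i j · 𝟙(⟪w i, D j x⟫ > 0) • w i)` converges to `0`. -/
theorem saliency_map_vanishes {Ω : Type*} [MeasureSpace Ω]
    [IsProbabilityMeasure (ℙ : Measure Ω)]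
    (c : ℝ) (hc : 0 < c) (d p J : ℕ) (hd : 0 < d) (hp : 0 < p) (hJ : 0 < J)
    (x : EuclideanSpace ℝ (Fin d))
    (D : Fin J → EuclideanSpace ℝ (Fin d) →L[ℝ] EuclideanSpace ℝ (Fin p))
    (w : ℕ → Ω → EuclideanSpace ℝ (Fin p)) (V : ℕ × Fin J → Ω → ℝ)
    (hindep : iIndepFun
      (fun k : (ℕ × Fin p) ⊕ (ℕ × Fin J) =>
        Sum.elim (fun im : ℕ × Fin p => fun ω => w im.1 ω im.2)
          (fun ij : ℕ × Fin J => V ij) k) ℙ)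
    (hw : ∀ i m, Measure.map (fun ω => w i ω m) ℙ = gaussianReal 0 ⟨c ^ 2, sq_nonneg c⟩)
    (hV : ∀ i j, Measure.map (V (i, j)) ℙ = gaussianReal 0 ⟨c ^ 2, sq_nonneg c⟩) :
    ∀ᵐ ω ∂ℙ, Tendsto (fun N : ℕ =>
        (N : ℝ)⁻¹ • ∑ i ∈ Finset.range N, ∑ j : Fin J,
          (ContinuousLinearMap.adjoint (D j))
            ((V (i, j) ω * (if 0 < ⟪w i ω, D j x⟫ then (1 : ℝ) else 0)) • w i ω))
      atTop (𝓝 (0 : EuclideanSpace ℝ (Fin d))) := by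
  classical
  set ν : Measure ℝ := gaussianReal 0 ⟨c ^ 2, sq_nonneg c⟩ with hνdef
  set f : (ℕ × Fin p) ⊕ (ℕ × Fin J) → Ω → ℝ :=
    fun k => Sum.elim (fun im : ℕ × Fin p => fun ω => w im.1 ω im.2)
      (fun ij : ℕ × Fin J => V ij) k with hfdef
  have hmapf : ∀ k, Measure.map (f k) ℙ = ν := by
    rintro (⟨i, m⟩ | ⟨i, j⟩)
    · exact hw i m
    · exact hV i j
  have haef : ∀ k, AEMeasurable (f k) ℙ := by
    intro k
    by_contra hcon
    have h0 := hmapf k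
    rw [Measure.map_of_not_aemeasurable hcon] at h0
    have := congrArg (fun μ : Measure ℝ => μ Set.univ) h0
    have h1 := (instIsProbabilityMeasureGaussianReal 0 ⟨c ^ 2, sq_nonneg c⟩).measure_univ
    rw [← this] at h1
    simp at h1
  let g : (ℕ × Fin p) ⊕ (ℕ × Fin J) → Ω → ℝ := fun k => (haef k).mk (f k)
  have hg : ∀ k, Measurable (g k) := fun k => (haef k).measurable_mk
  have hfg : ∀ k, f k =ᵐ[ℙ] g k := fun k => (haef k).ae_eq_mk
  have hmapg : ∀ k, Measure.map (g k) ℙ = ν := fun k => by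
    rw [← Measure.map_congr (hfg k)]; exact hmapf k
  have hindepg : iIndepFun g ℙ := aux_iIndepFun_congr hindep hfg
  -- index embeddings
  let u : ℕ → (Fin p ⊕ Fin J) → (ℕ × Fin p) ⊕ (ℕ × Fin J) :=
    fun i k => Sum.elim (fun m => Sum.inl (i, m)) (fun j => Sum.inr (i, j)) k
  have hu_inj : ∀ i, Function.Injective (u i) := by
    intro i k k' h
    cases k <;> cases k' <;> simp_all [u]
  -- the fixed measurable map building the saliency term from coordinates
  let Wv : (Fin p ⊕ Fin J → ℝ) → EuclideanSpace ℝ (Fin p) := fun v => WithLp.toLp 2 fun m => v (Sum.inl m)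
  have hWv : Measurable Wv :=
    (WithLp.measurable_toLp 2 _).comp (measurable_pi_lambda _ fun m => measurable_pi_apply _)
  let G : Fin J → (Fin p ⊕ Fin J → ℝ) → EuclideanSpace ℝ (Fin p) := fun j v =>
    (v (Sum.inr j) * (if 0 < ⟪Wv v, D j x⟫ then (1 : ℝ) else 0)) • Wv v
  have hinnermeas : ∀ j : Fin J, Measurable fun v : Fin p ⊕ Fin J → ℝ => ⟪Wv v, D j x⟫ :=
    fun j => ((continuous_id.inner continuous_const).measurable).comp hWv
  have hitemeas : ∀ j : Fin J, Measurable fun v : Fin p ⊕ Fin J → ℝ =>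
      (if 0 < ⟪Wv v, D j x⟫ then (1 : ℝ) else 0) := fun j =>
    Measurable.ite (measurableSet_lt measurable_const (hinnermeas j))
      measurable_const measurable_const
  have hGmeas : ∀ j, Measurable (G j) := fun j =>
    ((measurable_pi_apply _).mul (hitemeas j)).smul hWv
  let F : (Fin p ⊕ Fin J → ℝ) → EuclideanSpace ℝ (Fin d) := fun v =>
    ∑ j : Fin J, (ContinuousLinearMap.adjoint (D j)) (G j v)
  have hFmeas : Measurable F := Finset.measurable_sum _ fun j _ =>
    (ContinuousLinearMap.adjoint (D j)).continuous.measurable.comp (hGmeas j)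
  -- the i.i.d. sequence
  let h : ℕ → Ω → (Fin p ⊕ Fin J → ℝ) := fun i ω k => g (u i k) ω
  have hhmeas : ∀ i, Measurable (h i) := fun i => measurable_pi_lambda _ fun k => hg _
  let Y : ℕ → Ω → EuclideanSpace ℝ (Fin d) := fun i ω => F (h i ω)
  have hYmeas : ∀ i, Measurable (Y i) := fun i => hFmeas.comp (hhmeas i)
  -- identical distribution
  have hνprob : IsProbabilityMeasure ν := instIsProbabilityMeasureGaussianReal 0 _
  have hmaph : ∀ i, Measure.map (h i) ℙ = Measure.pi (fun _ : Fin p ⊕ Fin J => ν) := fun i =>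
    aux_map_pi (fun k => hg _) (aux_iIndepFun_reindex (u i) (hu_inj i) hindepg) _
      (fun k => hmapg _)
  have hidh : ∀ i, IdentDistrib (h i) (h 0) ℙ ℙ := fun i =>
    ⟨(hhmeas i).aemeasurable, (hhmeas 0).aemeasurable, by rw [hmaph i, hmaph 0]⟩
  have hident : ∀ i, IdentDistrib (Y i) (Y 0) ℙ ℙ := fun i => (hidh i).comp hFmeas
  -- pairwise independence
  have hindepY : Pairwise (Function.onFun (IndepFun · · ℙ) Y) := by
    intro i i' hii'
    let S : ℕ → Finset ((ℕ × Fin p) ⊕ (ℕ × Fin J)) := fun n => Finset.image (u n) Finset.univ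
    have hdisj : Disjoint (S i) (S i') := by
      rw [Finset.disjoint_left]
      rintro a ha ha'
      obtain ⟨k, -, rfl⟩ := Finset.mem_image.1 ha
      obtain ⟨k', -, hk'⟩ := Finset.mem_image.1 ha'
      cases k <;> cases k' <;> simp [u] at hk' <;> exact hii' (hk'.1.symm)
    have hIF := hindepg.indepFun_finset (S i) (S i') hdisj (fun k => hg k)
    let ρ : ∀ n, (↥(S n) → ℝ) → (Fin p ⊕ Fin J → ℝ) := fun n v k =>
      v ⟨u n k, Finset.mem_image_of_mem _ (Finset.mem_univ k)⟩
    have hρ : ∀ n, Measurable (ρ n) := fun n =>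
      measurable_pi_lambda _ fun k => measurable_pi_apply _
    exact hIF.comp (hFmeas.comp (hρ i)) (hFmeas.comp (hρ i'))
  -- integrability infrastructure
  have hintg : ∀ k, Integrable (g k) ℙ := fun k => by
    have h1 : Integrable id (Measure.map (g k) ℙ) := by
      rw [hmapg k]; exact aux_integrable_id_gaussian _
    rwa [integrable_map_measure aestronglyMeasurable_id (hg k).aemeasurable] at h1
  have hmeang : ∀ k, ∫ ω, g k ω ∂ℙ = 0 := fun k => by
    have h1 : ∫ y, y ∂(Measure.map (g k) ℙ) = ∫ ω, g k ω ∂ℙ :=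
      integral_map (hg k).aemeasurable aestronglyMeasurable_id
    rw [hmapg k] at h1
    exact h1.symm.trans (aux_integral_id_gaussian _)
  have hGbound : ∀ (j : Fin J) (v : Fin p ⊕ Fin J → ℝ),
      ‖G j v‖ ≤ ∑ m : Fin p, |v (Sum.inr j)| * |v (Sum.inl m)| := by
    intro j v
    have habs : |v (Sum.inr j) * (if 0 < ⟪Wv v, D j x⟫ then (1 : ℝ) else 0)|
        ≤ |v (Sum.inr j)| := by
      rw [abs_mul]
      have : |(if 0 < ⟪Wv v, D j x⟫ then (1 : ℝ) else 0)| ≤ 1 := by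
        split <;> simp
      calc |v (Sum.inr j)| * |(if 0 < ⟪Wv v, D j x⟫ then (1 : ℝ) else 0)|
          ≤ |v (Sum.inr j)| * 1 := by gcongr
        _ = |v (Sum.inr j)| := mul_one _
    calc ‖G j v‖
        = ‖(v (Sum.inr j) * (if 0 < ⟪Wv v, D j x⟫ then (1 : ℝ) else 0)) • Wv v‖ := rfl
      _ = |v (Sum.inr j) * (if 0 < ⟪Wv v, D j x⟫ then (1 : ℝ) else 0)| * ‖Wv v‖ := by
          rw [norm_smul, Real.norm_eq_abs]
      _ ≤ |v (Sum.inr j)| * (∑ m : Fin p, |Wv v m|) :=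
          mul_le_mul habs (aux_norm_le_sum (Wv v)) (norm_nonneg (Wv v)) (abs_nonneg _)
      _ = ∑ m : Fin p, |v (Sum.inr j)| * |v (Sum.inl m)| := Finset.mul_sum _ _ _
  have hFbound : ∀ v : Fin p ⊕ Fin J → ℝ,
      ‖F v‖ ≤ ∑ j : Fin J, ∑ m : Fin p,
        ‖(ContinuousLinearMap.adjoint (D j) :
            EuclideanSpace ℝ (Fin p) →L[ℝ] EuclideanSpace ℝ (Fin d))‖ *
          (|v (Sum.inr j)| * |v (Sum.inl m)|) := by
    intro v
    refine (norm_sum_le _ _).trans (Finset.sum_le_sum fun j _ => ?_)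
    calc ‖(ContinuousLinearMap.adjoint (D j)) (G j v)‖
        ≤ ‖(ContinuousLinearMap.adjoint (D j) :
            EuclideanSpace ℝ (Fin p) →L[ℝ] EuclideanSpace ℝ (Fin d))‖ * ‖G j v‖ :=
          ContinuousLinearMap.le_opNorm _ _
      _ ≤ ‖(ContinuousLinearMap.adjoint (D j) :
            EuclideanSpace ℝ (Fin p) →L[ℝ] EuclideanSpace ℝ (Fin d))‖ *
            ∑ m : Fin p, |v (Sum.inr j)| * |v (Sum.inl m)| :=
          mul_le_mul_of_nonneg_left (hGbound j v) (norm_nonneg _)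
      _ = ∑ m : Fin p, ‖(ContinuousLinearMap.adjoint (D j) :
            EuclideanSpace ℝ (Fin p) →L[ℝ] EuclideanSpace ℝ (Fin d))‖ *
            (|v (Sum.inr j)| * |v (Sum.inl m)|) := Finset.mul_sum _ _ _
  have hintVW : ∀ (j : Fin J) (m : Fin p),
      Integrable (fun ω => |g (u 0 (Sum.inr j)) ω| * |g (u 0 (Sum.inl m)) ω|) ℙ := by
    intro j m
    have hne : (u 0 (Sum.inr j)) ≠ (u 0 (Sum.inl m)) := by simp [u]
    have hi := (hindepg.indepFun hne).comp measurable_abs measurable_abs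
    exact hi.integrable_mul (hintg _).abs (hintg _).abs
  have hYint : Integrable (Y 0) ℙ := by
    refine Integrable.mono' (g := fun ω => ∑ j : Fin J, ∑ m : Fin p,
        ‖(ContinuousLinearMap.adjoint (D j) :
            EuclideanSpace ℝ (Fin p) →L[ℝ] EuclideanSpace ℝ (Fin d))‖ *
          (|g (u 0 (Sum.inr j)) ω| * |g (u 0 (Sum.inl m)) ω|)) ?_
      (hYmeas 0).aestronglyMeasurable (ae_of_all _ fun ω => ?_)
    · exact integrable_finset_sum _ fun j _ => integrable_finset_sum _ fun m _ =>
        (hintVW j m).const_mul _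
    · exact hFbound (h 0 ω)
  -- the Z's and their vanishing means
  let Z : Fin J → Ω → EuclideanSpace ℝ (Fin p) := fun j ω => G j (h 0 ω)
  have hZmeas : ∀ j, Measurable (Z j) := fun j => (hGmeas j).comp (hhmeas 0)
  have hZint : ∀ j, Integrable (Z j) ℙ := by
    intro j
    refine Integrable.mono' (g := fun ω => ∑ m : Fin p,
        |g (u 0 (Sum.inr j)) ω| * |g (u 0 (Sum.inl m)) ω|) ?_
      (hZmeas j).aestronglyMeasurable (ae_of_all _ fun ω => ?_)
    · exact integrable_finset_sum _ fun m _ => hintVW j m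
    · exact hGbound j (h 0 ω)
  have hZmean : ∀ j, ∫ ω, Z j ω ∂ℙ = 0 := by
    intro j
    refine PiLp.ext fun m => ?_
    have h4 : (∫ ω, Z j ω ∂ℙ) m = ∫ ω, (Z j ω) m ∂ℙ := by
      have := (EuclideanSpace.proj m (𝕜 := ℝ)).integral_comp_comm (hZint j)
      simpa using this.symm
    have h5 : (fun ω => (Z j ω) m) = (g (u 0 (Sum.inr j)) * fun ω =>
        (if 0 < ⟪Wv (h 0 ω), D j x⟫ then (1 : ℝ) else 0) * g (u 0 (Sum.inl m)) ω) := by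
      funext ω
      show g (u 0 (Sum.inr j)) ω * (if 0 < ⟪Wv (h 0 ω), D j x⟫ then (1 : ℝ) else 0)
            * g (u 0 (Sum.inl m)) ω
          = g (u 0 (Sum.inr j)) ω *
            ((if 0 < ⟪Wv (h 0 ω), D j x⟫ then (1 : ℝ) else 0) * g (u 0 (Sum.inl m)) ω)
      ring
    rw [h4, h5]
    -- independence of the weight and the filter-functional
    have hIF : IndepFun (g (u 0 (Sum.inr j)))
        (fun ω => (if 0 < ⟪Wv (h 0 ω), D j x⟫ then (1 : ℝ) else 0) *
          g (u 0 (Sum.inl m)) ω) ℙ := by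
      let S : Finset ((ℕ × Fin p) ⊕ (ℕ × Fin J)) := {u 0 (Sum.inr j)}
      let T : Finset ((ℕ × Fin p) ⊕ (ℕ × Fin J)) :=
        Finset.image (fun m' : Fin p => u 0 (Sum.inl m')) Finset.univ
      have hdisj : Disjoint S T := by
        rw [Finset.disjoint_left]
        rintro a ha ha'
        rw [Finset.mem_singleton] at ha
        obtain ⟨m', -, hm'⟩ := Finset.mem_image.1 ha'
        rw [ha] at hm'
        simp [u] at hm'
      have hbase := hindepg.indepFun_finset S T hdisj (fun k => hg k)
      let φ : (↥S → ℝ) → ℝ := fun v => v ⟨u 0 (Sum.inr j), Finset.mem_singleton_self _⟩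
      let Wt : (↥T → ℝ) → EuclideanSpace ℝ (Fin p) := fun v => WithLp.toLp 2 fun m' =>
        v ⟨u 0 (Sum.inl m'), Finset.mem_image_of_mem _ (Finset.mem_univ m')⟩
      let ψ : (↥T → ℝ) → ℝ := fun v =>
        (if 0 < ⟪Wt v, D j x⟫ then (1 : ℝ) else 0) *
          v ⟨u 0 (Sum.inl m), Finset.mem_image_of_mem _ (Finset.mem_univ m)⟩
      have hWt : Measurable Wt :=
          (WithLp.measurable_toLp 2 _).comp (measurable_pi_lambda _ fun m' => measurable_pi_apply _)
      have hφ : Measurable φ := measurable_pi_apply _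
      have hψ : Measurable ψ := by
        refine Measurable.mul ?_ (measurable_pi_apply _)
        refine Measurable.ite (measurableSet_lt measurable_const ?_) measurable_const
          measurable_const
        exact (continuous_id.inner continuous_const).measurable.comp hWt
      exact hbase.comp hφ hψ
    have hint2 : Integrable (fun ω => (if 0 < ⟪Wv (h 0 ω), D j x⟫ then (1 : ℝ) else 0) *
        g (u 0 (Sum.inl m)) ω) ℙ := by
      refine Integrable.mono' (g := fun ω => |g (u 0 (Sum.inl m)) ω|)
        (hintg _).abs ?_ (ae_of_all _ fun ω => ?_)
      · exact (((hitemeas j).comp (hhmeas 0)).mul (hg _)).aestronglyMeasurable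
      · rw [Real.norm_eq_abs, abs_mul]
        have : |(if 0 < ⟪Wv (h 0 ω), D j x⟫ then (1 : ℝ) else 0)| ≤ 1 := by split <;> simp
        calc |(if 0 < ⟪Wv (h 0 ω), D j x⟫ then (1:ℝ) else 0)| * |g (u 0 (Sum.inl m)) ω|
            ≤ 1 * |g (u 0 (Sum.inl m)) ω| := by gcongr
          _ = |g (u 0 (Sum.inl m)) ω| := one_mul _
    have h6 := hIF.integral_mul_eq_mul_integral (hintg _).aestronglyMeasurable
      hint2.aestronglyMeasurable
    rw [hmeang, zero_mul] at h6
    exact h6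
  -- mean of Y 0 is zero
  have hYmean : ∫ ω, Y 0 ω ∂ℙ = 0 := by
    have h0 : (fun ω => Y 0 ω)
        = fun ω => ∑ j : Fin J, (ContinuousLinearMap.adjoint (D j)) (Z j ω) := rfl
    have h1 : ∫ ω, ∑ j : Fin J, (ContinuousLinearMap.adjoint (D j)) (Z j ω) ∂ℙ
        = ∑ j : Fin J, ∫ ω, (ContinuousLinearMap.adjoint (D j)) (Z j ω) ∂ℙ :=
      integral_finset_sum _ fun j _ =>
        (ContinuousLinearMap.adjoint (D j)).integrable_comp (hZint j)
    rw [show (∫ ω, Y 0 ω ∂ℙ)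
        = ∫ ω, ∑ j : Fin J, (ContinuousLinearMap.adjoint (D j)) (Z j ω) ∂ℙ from rfl, h1]
    refine Finset.sum_eq_zero fun j _ => ?_
    rw [(ContinuousLinearMap.adjoint (D j)).integral_comp_comm (hZint j), hZmean j, map_zero]
  -- strong law of large numbers
  have hLLN := ProbabilityTheory.strong_law_ae Y hYint hindepY hident
  rw [show 𝔼[Y 0] = 0 from hYmean] at hLLN
  -- transfer back to the original random variables
  have hae : ∀ᵐ ω ∂(ℙ : Measure Ω), ∀ k, f k ω = g k ω := ae_all_iff.2 hfg
  filter_upwards [hLLN, hae] with ω hω hωf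
  have hterm : ∀ (i : ℕ) (j : Fin J),
      (ContinuousLinearMap.adjoint (D j))
          ((V (i, j) ω * (if 0 < ⟪w i ω, D j x⟫ then (1 : ℝ) else 0)) • w i ω)
        = (ContinuousLinearMap.adjoint (D j)) (G j (h i ω)) := by
    intro i j
    have hwω : w i ω = Wv (h i ω) := PiLp.ext fun m => hωf (Sum.inl (i, m))
    have hVω : V (i, j) ω = h i ω (Sum.inr j) := hωf (Sum.inr (i, j))
    rw [hwω, hVω]
  have hfuneq : (fun N : ℕ =>
      (N : ℝ)⁻¹ • ∑ i ∈ Finset.range N, ∑ j : Fin J,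
        (ContinuousLinearMap.adjoint (D j))
          ((V (i, j) ω * (if 0 < ⟪w i ω, D j x⟫ then (1 : ℝ) else 0)) • w i ω))
      = fun N : ℕ => (N : ℝ)⁻¹ • ∑ i ∈ Finset.range N, Y i ω := by
    funext N
    congr 1
    refine Finset.sum_congr rfl fun i _ => ?_
    calc ∑ j : Fin J, (ContinuousLinearMap.adjoint (D j))
          ((V (i, j) ω * (if 0 < ⟪w i ω, D j x⟫ then (1 : ℝ) else 0)) • w i ω)
        = ∑ j : Fin J, (ContinuousLinearMap.adjoint (D j)) (G j (h i ω)) :=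
          Finset.sum_congr rfl fun j _ => hterm i j
      _ = Y i ω := rfl
  rw [hfuneq]
  exact hω
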